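/- arXiv:1505.07404 — 2 statements merged into one kernel-verified Lean document; each statement's English description precedes it below -/
import Mathlib

section
/- Let φ be a hyperbolic automorphism of D and let ψ be any automorphism of D. If (b_n) is a sequence in D with ψ(φ^[n](b_n)) = 0 for all n ≥ 0, then (b_n) is a Blaschke sequence: ∑_{n=0}^∞ (1 − |b_n|) < ∞. -/
/-- A (holomorphic) automorphism of the open unit disc `D = {z : |z| < 1}`:
a map of the form `z ↦ λ(z − a)/(1 − conj(a)·z)` with `a ∈ D` and `|λ| = 1`. -/
def IsDiscAut (φ : ℂ → ℂ) : Prop :=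
  ∃ a lam : ℂ, ‖a‖ < 1 ∧ ‖lam‖ = 1 ∧
    ∀ z : ℂ, φ z = lam * (z - a) / (1 - (starRingEnd ℂ) a * z)

/-- An elliptic automorphism: `φ ≠ id` with a fixed point in the open disc. -/
def IsEllipticAut (φ : ℂ → ℂ) : Prop :=
  IsDiscAut φ ∧ φ ≠ id ∧ ∃ a : ℂ, ‖a‖ < 1 ∧ φ a = a

/-- A parabolic automorphism: `φ ≠ id` with exactly one fixed point in the closed disc,
lying on the unit circle. -/
def IsParabolicAut (φ : ℂ → ℂ) : Prop :=
  IsDiscAut φ ∧ φ ≠ id ∧ ∃ w : ℂ, ‖w‖ = 1 ∧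
    {z : ℂ | ‖z‖ ≤ 1 ∧ φ z = z} = {w}

/-- A hyperbolic automorphism: `φ ≠ id` with exactly two fixed points in the closed disc,
both on the unit circle. -/
def IsHyperbolicAut (φ : ℂ → ℂ) : Prop :=
  IsDiscAut φ ∧ φ ≠ id ∧ ∃ w₁ w₂ : ℂ, w₁ ≠ w₂ ∧
    ‖w₁‖ = 1 ∧ ‖w₂‖ = 1 ∧
    {z : ℂ | ‖z‖ ≤ 1 ∧ φ z = z} = {w₁, w₂}

/-- The parabolic automorphism `φ_c(z) = (1 + c − 2z)/(2c − (1 + c)z)` fixing `1`. -/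
noncomputable def phiC (c : ℂ) : ℂ → ℂ := fun z => (1 + c - 2 * z) / (2 * c - (1 + c) * z)

/-- The hyperbolic automorphism `ψ_r(z) = (z − r)/(1 − r z)` fixing `−1` and `1`. -/
noncomputable def psiR (r : ℝ) : ℂ → ℂ := fun z => (z - (r : ℂ)) / (1 - (r : ℂ) * z)

lemma one_sub_ne {x : ℂ} (h : ‖x‖ < 1) : 1 - x ≠ 0 := by
  intro h0
  have : (1:ℂ) = x := by linear_combination h0
  rw [← this] at h; simp at h

lemma sub_circle_ne {x w : ℂ} (hx : ‖x‖ < 1) (hw : ‖w‖ = 1) :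
    x - w ≠ 0 := by
  intro h0
  have : x = w := by linear_combination h0
  rw [this, hw] at hx; linarith

lemma aux_mem_ball {a lam z : ℂ} (ha : ‖a‖ < 1) (hlam : ‖lam‖ = 1)
    (hz : ‖z‖ < 1) :
    ‖lam * (z - a) / (1 - (starRingEnd ℂ) a * z)‖ < 1 := by
  have hca : ‖(starRingEnd ℂ) a * z‖ < 1 := by
    rw [norm_mul, Complex.norm_conj]
    nlinarith [norm_nonneg a, norm_nonneg z]
  have hden : 1 - (starRingEnd ℂ) a * z ≠ 0 := one_sub_ne hca
  have key : ((Complex.normSq (1 - (starRingEnd ℂ) a * z) : ℂ)) - Complex.normSq (z - a)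
      = (1 - Complex.normSq a) * (1 - Complex.normSq z) := by
    rw [← Complex.mul_conj, ← Complex.mul_conj, ← Complex.mul_conj, ← Complex.mul_conj]
    simp only [map_sub, map_mul, map_one, Complex.conj_conj]
    ring
  have keyR : Complex.normSq (1 - (starRingEnd ℂ) a * z) - Complex.normSq (z - a)
      = (1 - Complex.normSq a) * (1 - Complex.normSq z) := by exact_mod_cast key
  have hna : Complex.normSq a < 1 := by rw [← Complex.sq_norm]; nlinarith [norm_nonneg a]
  have hnz : Complex.normSq z < 1 := by rw [← Complex.sq_norm]; nlinarith [norm_nonneg z]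
  have hlt : Complex.normSq (z - a) < Complex.normSq (1 - (starRingEnd ℂ) a * z) := by nlinarith
  have habs : ‖z - a‖ < ‖1 - (starRingEnd ℂ) a * z‖ := by
    rw [Complex.norm_def, Complex.norm_def]
    exact Real.sqrt_lt_sqrt (Complex.normSq_nonneg _) hlt
  rw [norm_div, norm_mul, hlam, one_mul, div_lt_one (norm_pos_iff.mpr hden)]
  exact habs

lemma blaschke_geom (b : ℕ → ℂ) (hb : ∀ n, ‖b n‖ < 1) (w : ℂ)
    (hw : ‖w‖ = 1) (C r : ℝ) (hr0 : 0 ≤ r) (hr1 : r < 1)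
    (hle : ∀ n, ‖b n - w‖ ≤ C * r ^ n) :
    Summable fun n => 1 - ‖b n‖ := by
  refine Summable.of_nonneg_of_le (fun n => by linarith [(hb n).le]) (fun n => ?_)
    ((summable_geometric_of_lt_one hr0 hr1).mul_left C)
  have h1 : ‖w‖ ≤ ‖w - b n‖ + ‖b n‖ := by
    calc ‖w‖ = ‖(w - b n) + b n‖ := by ring_nf
    _ ≤ _ := norm_add_le _ _
  have h2 : ‖w - b n‖ = ‖b n - w‖ := by
    rw [← neg_sub (b n) w, norm_neg]
  have := hle n
  rw [hw] at h1
  linarith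

lemma key_md {a lam w : ℂ} (hrel : lam * (w - a) = w * (1 - (starRingEnd ℂ) a * w))
    (hww : w * (starRingEnd ℂ) w = 1) :
    (lam + (starRingEnd ℂ) a * w) * (starRingEnd ℂ) (1 - (starRingEnd ℂ) a * w)
      = 1 - a * (starRingEnd ℂ) a := by
  simp only [map_sub, map_mul, map_one, Complex.conj_conj]
  linear_combination ((starRingEnd ℂ) w) * hrel +
    (1 - lam - (starRingEnd ℂ) a * w - a * (starRingEnd ℂ) a) * hww

lemma key_lamd {a lam w : ℂ} (hrel : lam * (w - a) = w * (1 - (starRingEnd ℂ) a * w))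
    (hww : w * (starRingEnd ℂ) w = 1) :
    lam * (starRingEnd ℂ) (1 - (starRingEnd ℂ) a * w) = 1 - (starRingEnd ℂ) a * w := by
  simp only [map_sub, map_mul, map_one, Complex.conj_conj]
  linear_combination ((starRingEnd ℂ) w) * hrel + (1 - lam - (starRingEnd ℂ) a * w) * hww

lemma key_ratio {lam d₁ d₂ : ℂ} (h1 : lam * (starRingEnd ℂ) d₁ = d₁)
    (h2 : lam * (starRingEnd ℂ) d₂ = d₂) :
    d₁ * (starRingEnd ℂ) d₂ = (starRingEnd ℂ) d₁ * d₂ := by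
  linear_combination ((starRingEnd ℂ) d₁) * h2 - ((starRingEnd ℂ) d₂) * h1

/-- If `φ` is hyperbolic, `ψ` is any disc automorphism, and `(b_n)` in `D`
satisfies `ψ(φ^[n](b_n)) = 0` for all `n`, then `(b_n)` is a Blaschke sequence. -/
theorem stmt_5 (φ ψ : ℂ → ℂ) (hφ : IsHyperbolicAut φ) (hψ : IsDiscAut ψ)
    (b : ℕ → ℂ) (hb : ∀ n : ℕ, ‖b n‖ < 1)
    (hzero : ∀ n : ℕ, ψ (φ^[n] (b n)) = 0) :
    Summable (fun n : ℕ => 1 - ‖b n‖) := by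
  obtain ⟨⟨a, lam, ha, hlam, hfe⟩, -, w₁, w₂, hw12, hw1, hw2, hfix⟩ := hφ
  obtain ⟨a', lam', ha', hlam', hfe'⟩ := hψ
  -- fixed point facts
  have hm1 : w₁ ∈ {z : ℂ | ‖z‖ ≤ 1 ∧ φ z = z} := by rw [hfix]; left; rfl
  have hm2 : w₂ ∈ {z : ℂ | ‖z‖ ≤ 1 ∧ φ z = z} := by rw [hfix]; right; rfl
  have hcw : ∀ w : ℂ, ‖w‖ = 1 → 1 - (starRingEnd ℂ) a * w ≠ 0 := by
    intro w hw
    apply one_sub_ne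
    rw [norm_mul, Complex.norm_conj, hw, mul_one]; exact ha
  have hd1 : 1 - (starRingEnd ℂ) a * w₁ ≠ 0 := hcw _ hw1
  have hd2 : 1 - (starRingEnd ℂ) a * w₂ ≠ 0 := hcw _ hw2
  have rel1 : lam * (w₁ - a) = w₁ * (1 - (starRingEnd ℂ) a * w₁) := by
    have := hm1.2; rw [hfe] at this
    rw [div_eq_iff hd1] at this; linear_combination this
  have rel2 : lam * (w₂ - a) = w₂ * (1 - (starRingEnd ℂ) a * w₂) := by
    have := hm2.2; rw [hfe] at this
    rw [div_eq_iff hd2] at this; linear_combination this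
  have ha0 : a ≠ 0 := by
    intro h
    have h0 : (0:ℂ) ∈ {z : ℂ | ‖z‖ ≤ 1 ∧ φ z = z} := by
      refine ⟨by simp, ?_⟩
      rw [hfe, h]; simp
    rw [hfix] at h0
    rcases h0 with h0 | h0
    · rw [← h0] at hw1; simp at hw1
    · rw [← h0] at hw2; simp at hw2
  have hc0 : (starRingEnd ℂ) a ≠ 0 := by simpa using ha0
  have hww1 : w₁ * (starRingEnd ℂ) w₁ = 1 := by
    rw [Complex.mul_conj, ← Complex.sq_norm, hw1]; norm_num
  have hww2 : w₂ * (starRingEnd ℂ) w₂ = 1 := by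
    rw [Complex.mul_conj, ← Complex.sq_norm, hw2]; norm_num
  have hmd1 := key_md rel1 hww1
  have hmd2 := key_md rel2 hww2
  have hlamd1 := key_lamd rel1 hww1
  have hlamd2 := key_lamd rel2 hww2
  have hnsa : Complex.normSq a < 1 := by rw [← Complex.sq_norm]; nlinarith [norm_nonneg a]
  have hacR : ‖1 - a * (starRingEnd ℂ) a‖ = 1 - Complex.normSq a := by
    rw [Complex.mul_conj, ← Complex.ofReal_one, ← Complex.ofReal_sub, Complex.norm_real, Real.norm_eq_abs,
      abs_of_pos (by linarith)]
  have habsmd1 : ‖lam + (starRingEnd ℂ) a * w₁‖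
      * ‖1 - (starRingEnd ℂ) a * w₁‖ = 1 - Complex.normSq a := by
    rw [← hacR, ← hmd1, norm_mul, Complex.norm_conj]
  have habsmd2 : ‖lam + (starRingEnd ℂ) a * w₂‖
      * ‖1 - (starRingEnd ℂ) a * w₂‖ = 1 - Complex.normSq a := by
    rw [← hacR, ← hmd2, norm_mul, Complex.norm_conj]
  have hm1ne : lam + (starRingEnd ℂ) a * w₁ ≠ 0 := by
    intro h; rw [h] at habsmd1; simp at habsmd1; linarith
  have hm2ne : lam + (starRingEnd ℂ) a * w₂ ≠ 0 := by
    intro h; rw [h] at habsmd2; simp at habsmd2; linarith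
  -- |d₁| ≠ |d₂|
  have habsdne : ‖1 - (starRingEnd ℂ) a * w₁‖
      ≠ ‖1 - (starRingEnd ℂ) a * w₂‖ := by
    intro h
    have hratio := key_ratio hlamd1 hlamd2
    have hnsq : (1 - (starRingEnd ℂ) a * w₁) * (starRingEnd ℂ) (1 - (starRingEnd ℂ) a * w₁)
        = (1 - (starRingEnd ℂ) a * w₂) * (starRingEnd ℂ) (1 - (starRingEnd ℂ) a * w₂) := by
      rw [Complex.mul_conj, Complex.mul_conj, ← Complex.sq_norm, ← Complex.sq_norm, h]
    have hprod : ((1 - (starRingEnd ℂ) a * w₁) - (1 - (starRingEnd ℂ) a * w₂))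
        * ((starRingEnd ℂ) (1 - (starRingEnd ℂ) a * w₁)
          + (starRingEnd ℂ) (1 - (starRingEnd ℂ) a * w₂)) = 0 := by
      linear_combination hnsq + hratio
    rcases mul_eq_zero.mp hprod with h0 | h0
    · have : (starRingEnd ℂ) a * (w₁ - w₂) = 0 := by linear_combination -h0
      rcases mul_eq_zero.mp this with h1 | h1
      · exact hc0 h1
      · exact hw12 (by linear_combination h1)
    · have hsum : (1 - (starRingEnd ℂ) a * w₁) + (1 - (starRingEnd ℂ) a * w₂) = 0 := by
        have := congrArg (starRingEnd ℂ) h0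
        simpa [map_add, Complex.conj_conj] using this
      have h2 : (starRingEnd ℂ) a * (w₁ + w₂) = 2 := by linear_combination -hsum
      have habs2 : ‖(starRingEnd ℂ) a * (w₁ + w₂)‖ = 2 := by rw [h2]; simp
      have : ‖(starRingEnd ℂ) a * (w₁ + w₂)‖ < 2 := by
        rw [norm_mul, Complex.norm_conj]
        calc ‖a‖ * ‖w₁ + w₂‖
            ≤ ‖a‖ * (‖w₁‖ + ‖w₂‖) :=
              mul_le_mul_of_nonneg_left (norm_add_le _ _) (norm_nonneg a)
          _ < 2 := by rw [hw1, hw2]; linarith [norm_nonneg a]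
      linarith
  -- orbit stays in disc
  have hmaps : ∀ z : ℂ, ‖z‖ < 1 → ‖φ z‖ < 1 := by
    intro z hz; rw [hfe]; exact aux_mem_ball ha hlam hz
  have hiter : ∀ (n : ℕ) (z : ℂ), ‖z‖ < 1 → ‖φ^[n] z‖ < 1 := by
    intro n
    induction n with
    | zero => intro z hz; simpa using hz
    | succ k ih =>
      intro z hz
      rw [Function.iterate_succ_apply]
      exact ih _ (hmaps z hz)
  -- φ^[n] (b n) = a'
  have hfixa : ∀ n : ℕ, φ^[n] (b n) = a' := by
    intro n
    have hz := hzero n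
    rw [hfe'] at hz
    have hdn : 1 - (starRingEnd ℂ) a' * (φ^[n] (b n)) ≠ 0 := by
      apply one_sub_ne
      rw [norm_mul, Complex.norm_conj]
      nlinarith [norm_nonneg a', norm_nonneg (φ^[n] (b n)),
        hiter n (b n) (hb n)]
    rw [div_eq_zero_iff] at hz
    rcases hz with hz | hz
    · rcases mul_eq_zero.mp hz with h | h
      · exfalso; rw [h] at hlam'; simp at hlam'
      · linear_combination h
    · exact absurd hz hdn
  -- key identities
  have hk : ∀ (w : ℂ), lam * (w - a) = w * (1 - (starRingEnd ℂ) a * w) →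
      ∀ z : ℂ, 1 - (starRingEnd ℂ) a * z ≠ 0 →
      (φ z - w) * (1 - (starRingEnd ℂ) a * z) = (lam + (starRingEnd ℂ) a * w) * (z - w) := by
    intro w hrel z hz
    rw [hfe]
    rw [sub_mul, div_mul_cancel₀ _ hz]
    linear_combination hrel
  set μ : ℂ := (lam + (starRingEnd ℂ) a * w₁) / (lam + (starRingEnd ℂ) a * w₂) with hμ
  have hμne : μ ≠ 0 := div_ne_zero hm1ne hm2ne
  set u : ℂ → ℂ := fun x => (x - w₁) / (x - w₂) with hu
  have hstep : ∀ z : ℂ, ‖z‖ < 1 → u (φ z) = μ * u z := by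
    intro z hz
    have hdz : 1 - (starRingEnd ℂ) a * z ≠ 0 := by
      apply one_sub_ne; rw [norm_mul, Complex.norm_conj]
      nlinarith [norm_nonneg a, norm_nonneg z]
    have hk1 := hk w₁ rel1 z hdz
    have hk2 := hk w₂ rel2 z hdz
    have hφz := hmaps z hz
    have hne1 : φ z - w₂ ≠ 0 := sub_circle_ne hφz hw2
    have hne2 : z - w₂ ≠ 0 := sub_circle_ne hz hw2
    have hcross : (φ z - w₁) * ((lam + (starRingEnd ℂ) a * w₂) * (z - w₂))
        = ((lam + (starRingEnd ℂ) a * w₁) * (z - w₁)) * (φ z - w₂) := by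
      apply mul_right_cancel₀ hdz
      linear_combination ((lam + (starRingEnd ℂ) a * w₂) * (z - w₂)) * hk1
        - ((lam + (starRingEnd ℂ) a * w₁) * (z - w₁)) * hk2
    show (φ z - w₁) / (φ z - w₂) = μ * ((z - w₁) / (z - w₂))
    rw [hμ, div_mul_div_comm, div_eq_div_iff hne1 (mul_ne_zero hm2ne hne2)]
    linear_combination hcross
  have horbit : ∀ n : ℕ, u a' = μ ^ n * u (b n) := by
    intro n
    rw [← hfixa n]
    generalize hzz : b n = z
    have hz : ‖z‖ < 1 := by rw [← hzz]; exact hb n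
    clear hzz
    induction n with
    | zero => simp
    | succ k ih =>
      rw [Function.iterate_succ_apply', hstep _ (hiter k z hz), ih, pow_succ]
      ring
  -- abs facts
  have habsμ : ‖μ‖ ≠ 1 := by
    intro h
    rw [hμ, norm_div, div_eq_one_iff_eq (norm_ne_zero_iff.mpr hm2ne)] at h
    rw [h] at habsmd1
    have hmpos : 0 < ‖lam + (starRingEnd ℂ) a * w₂‖ := norm_pos_iff.mpr hm2ne
    have : ‖1 - (starRingEnd ℂ) a * w₁‖
        = ‖1 - (starRingEnd ℂ) a * w₂‖ := by
      apply mul_left_cancel₀ (ne_of_gt hmpos)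
      rw [habsmd1, habsmd2]
    exact habsdne this
  have hμpos : 0 < ‖μ‖ := norm_pos_iff.mpr hμne
  have hbw2ne : ∀ n, b n - w₂ ≠ 0 := fun n => sub_circle_ne (hb n) hw2
  have hbw1ne : ∀ n, b n - w₁ ≠ 0 := fun n => sub_circle_ne (hb n) hw1
  have hsub2 : ∀ n, ‖b n - w₂‖ ≤ 2 := by
    intro n
    have : ‖b n - w₂‖ ≤ ‖b n‖ + ‖w₂‖ := by
      exact norm_sub_le (b n) w₂
    rw [hw2] at this; linarith [(hb n).le]
  have hsub1 : ∀ n, ‖b n - w₁‖ ≤ 2 := by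
    intro n
    have : ‖b n - w₁‖ ≤ ‖b n‖ + ‖w₁‖ := by
      exact norm_sub_le (b n) w₁
    rw [hw1] at this; linarith [(hb n).le]
  have hua'ne : u a' ≠ 0 := div_ne_zero (sub_circle_ne ha' hw1) (sub_circle_ne ha' hw2)
  have hApos : 0 < ‖u a'‖ := norm_pos_iff.mpr hua'ne
  have habsu : ∀ n : ℕ, ‖u a'‖ * ‖b n - w₂‖
      = ‖μ‖ ^ n * ‖b n - w₁‖ := by
    intro n
    have h1 := congrArg (‖·‖) (horbit n)
    rw [norm_mul, norm_pow] at h1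
    have h2 : ‖u (b n)‖ = ‖b n - w₁‖ / ‖b n - w₂‖ := by
      simp only [hu]; rw [norm_div]
    rw [h2] at h1
    have hBne : ‖b n - w₂‖ ≠ 0 := norm_ne_zero_iff.mpr (hbw2ne n)
    rw [h1]
    field_simp
  rcases lt_or_gt_of_ne habsμ with hlt | hgt
  · apply blaschke_geom b hb w₂ hw2 (2 / ‖u a'‖) (‖μ‖) hμpos.le hlt
    intro n
    have h := habsu n
    have h1 := hsub1 n
    have hpow : (0:ℝ) < ‖μ‖ ^ n := pow_pos hμpos n
    rw [div_mul_eq_mul_div, le_div_iff₀ hApos]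
    nlinarith [norm_nonneg (b n - w₂)]
  · apply blaschke_geom b hb w₁ hw1 (2 * ‖u a'‖) (‖μ‖)⁻¹
      (inv_nonneg.mpr hμpos.le) (inv_lt_one_of_one_lt₀ hgt)
    intro n
    have h := habsu n
    have h2 := hsub2 n
    have hpow : (0:ℝ) < ‖μ‖ ^ n := pow_pos hμpos n
    rw [inv_pow, ← div_eq_mul_inv, le_div_iff₀ hpow]
    nlinarith [hApos.le, norm_nonneg (b n - w₁)]
end

section
/- Let φ be an automorphism of D with the property that every sequence (a_n) in D satisfying φ^[n](a_n) = 0 for all n is a Blaschke sequence. Then for every automorphism ψ of D and every sequence (b_n) in D with ψ(φ^[n](b_n)) = 0 for all n, the sequence (b_n) is a Blaschke sequence. -/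
private lemma normSq_key (a z : ℂ) :
    Complex.normSq (1 - (starRingEnd ℂ) a * z) - Complex.normSq (z - a)
      = (1 - Complex.normSq a) * (1 - Complex.normSq z) := by
  simp only [Complex.normSq_apply, Complex.sub_re, Complex.sub_im, Complex.mul_re,
    Complex.mul_im, Complex.one_re, Complex.one_im, Complex.conj_re, Complex.conj_im]
  ring

private lemma denom_ne {a z : ℂ} (ha : ‖a‖ < 1) (hz : ‖z‖ < 1) :
    1 - (starRingEnd ℂ) a * z ≠ 0 := by
  intro h
  have h1 : (starRingEnd ℂ) a * z = 1 := (sub_eq_zero.mp h).symm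
  have h2 : ‖(starRingEnd ℂ) a * z‖ = 1 := by rw [h1]; simp
  rw [norm_mul, Complex.norm_conj] at h2
  nlinarith [norm_nonneg a, norm_nonneg z]

private lemma moebius_abs_lt {a u : ℂ} (ha : ‖a‖ < 1) (hu : ‖u‖ < 1) :
    ‖(u - a) / (1 - (starRingEnd ℂ) a * u)‖ < 1 := by
  have hd := denom_ne ha hu
  have hdpos : 0 < ‖1 - (starRingEnd ℂ) a * u‖ := by
    simpa [norm_pos_iff] using hd
  rw [norm_div, div_lt_one hdpos]
  have key := normSq_key a u
  have h1 : Complex.normSq (u - a) < Complex.normSq (1 - (starRingEnd ℂ) a * u) := by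
    have ha2 : Complex.normSq a < 1 := by
      rw [← Complex.sq_norm]; nlinarith [norm_nonneg a]
    have hu2 : Complex.normSq u < 1 := by
      rw [← Complex.sq_norm]; nlinarith [norm_nonneg u]
    nlinarith
  exact lt_of_pow_lt_pow_left₀ 2 (norm_nonneg _) (by
    rw [Complex.sq_norm, Complex.sq_norm]; exact h1)


private lemma aut_maps {φ : ℂ → ℂ} (hφ : IsDiscAut φ) {z : ℂ} (hz : ‖z‖ < 1) :
    ‖φ z‖ < 1 := by
  obtain ⟨a, lam, ha, hlam, hf⟩ := hφ
  rw [hf z]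
  have : lam * (z - a) / (1 - (starRingEnd ℂ) a * z)
      = lam * ((z - a) / (1 - (starRingEnd ℂ) a * z)) := by ring
  rw [this, norm_mul, hlam, one_mul]
  exact moebius_abs_lt ha hz

private lemma aut_surj {φ : ℂ → ℂ} (hφ : IsDiscAut φ) {w : ℂ} (hw : ‖w‖ < 1) :
    ∃ z : ℂ, ‖z‖ < 1 ∧ φ z = w := by
  obtain ⟨a, lam, ha, hlam, hf⟩ := hφ
  set u := (starRingEnd ℂ) lam * w with hu_def
  have hu : ‖u‖ < 1 := by
    rw [hu_def, norm_mul, Complex.norm_conj, hlam, one_mul]; exact hw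
  have hna : ‖-a‖ < 1 := by simpa using ha
  refine ⟨(u - (-a)) / (1 - (starRingEnd ℂ) (-a) * u), moebius_abs_lt hna hu, ?_⟩
  set z := (u - (-a)) / (1 - (starRingEnd ℂ) (-a) * u) with hz_def
  have hz : ‖z‖ < 1 := moebius_abs_lt hna hu
  have hd1 : 1 + (starRingEnd ℂ) a * u ≠ 0 := by
    have := denom_ne hna hu
    simpa [sub_neg_eq_add] using this
  have hd2 : 1 - (starRingEnd ℂ) a * z ≠ 0 := denom_ne ha hz
  have hl : lam * (starRingEnd ℂ) lam = 1 := by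
    rw [Complex.mul_conj]; norm_cast; rw [← Complex.sq_norm, hlam]; norm_num
  have hz_def' : z = (u + a) / (1 + (starRingEnd ℂ) a * u) := by
    rw [hz_def]; simp [sub_neg_eq_add]
  have e2 : z - a = u * (1 - (starRingEnd ℂ) a * z) := by
    rw [hz_def']
    have hd1' : 1 + u * (starRingEnd ℂ) a ≠ 0 := by rwa [mul_comm]
    field_simp
    ring
  rw [hf z, e2]
  rw [show lam * (u * (1 - (starRingEnd ℂ) a * z))
      = (lam * u) * (1 - (starRingEnd ℂ) a * z) by ring,
    mul_div_assoc, div_self hd2, mul_one, hu_def, ← mul_assoc, hl, one_mul]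

private lemma aut_step {φ : ℂ → ℂ} (hφ : IsDiscAut φ) {z w : ℂ}
    (hz : ‖z‖ < 1) (hw : ‖w‖ < 1) :
    ‖φ z - φ w‖ * ‖1 - (starRingEnd ℂ) w * z‖
      = ‖z - w‖ * ‖1 - (starRingEnd ℂ) (φ w) * (φ z)‖ := by
  obtain ⟨a, lam, ha, hlam, hf⟩ := hφ
  have hd1 : 1 - (starRingEnd ℂ) a * z ≠ 0 := denom_ne ha hz
  have hd2 : 1 - (starRingEnd ℂ) a * w ≠ 0 := denom_ne ha hw
  have hd2c : 1 - a * (starRingEnd ℂ) w ≠ 0 := by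
    intro h; apply hd2
    have := congrArg (starRingEnd ℂ) h; simpa using this
  have hl : lam * (starRingEnd ℂ) lam = 1 := by
    rw [Complex.mul_conj]; norm_cast; rw [← Complex.sq_norm, hlam]; norm_num
  set d1 := 1 - (starRingEnd ℂ) a * z with hd1def
  set d2 := 1 - (starRingEnd ℂ) a * w with hd2def
  have id1 : (φ z - φ w) * (d1 * d2) = lam * (1 - (starRingEnd ℂ) a * a) * (z - w) := by
    rw [hf z, hf w, hd1def, hd2def]
    have hd1' : 1 - z * (starRingEnd ℂ) a ≠ 0 := by rw [mul_comm]; exact hd1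
    have hd2' : 1 - (starRingEnd ℂ) a * w ≠ 0 := hd2
    field_simp
    ring
  have hcc : (starRingEnd ℂ) (φ w) * φ z
      = (starRingEnd ℂ) ((w - a) / d2) * ((z - a) / d1) := by
    rw [hf z, hf w]
    simp only [map_div₀, map_mul]
    calc (starRingEnd ℂ) lam * (starRingEnd ℂ) (w - a) / (starRingEnd ℂ) d2 *
            (lam * (z - a) / d1)
        = (lam * (starRingEnd ℂ) lam) *
            ((starRingEnd ℂ) (w - a) / (starRingEnd ℂ) d2 * ((z - a) / d1)) := by ring
      _ = (starRingEnd ℂ) (w - a) / (starRingEnd ℂ) d2 * ((z - a) / d1) := by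
          rw [hl, one_mul]
  have id2 : (1 - (starRingEnd ℂ) (φ w) * (φ z)) * ((starRingEnd ℂ) d2 * d1)
      = (1 - (starRingEnd ℂ) a * a) * (1 - (starRingEnd ℂ) w * z) := by
    rw [hcc, hd1def, hd2def]
    simp only [map_div₀, map_mul, map_sub, map_one, Complex.conj_conj]
    have hd1' : 1 - (starRingEnd ℂ) a * z ≠ 0 := hd1
    have hd2'' : 1 - a * (starRingEnd ℂ) w ≠ 0 := hd2c
    rw [div_mul_div_comm, sub_mul, one_mul, div_mul_cancel₀ _ (mul_ne_zero hd2'' hd1')]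
    ring
  have t1 := congrArg (‖·‖) id1
  have t2 := congrArg (‖·‖) id2
  simp only [norm_mul, Complex.norm_conj, hlam, one_mul] at t1 t2
  have hD1 : 0 < ‖d1‖ := by simpa [norm_pos_iff] using hd1
  have hD2 : 0 < ‖d2‖ := by simpa [norm_pos_iff] using hd2
  have hT : 0 < ‖1 - (starRingEnd ℂ) a * a‖ := by
    have : (1 : ℂ) - (starRingEnd ℂ) a * a ≠ 0 := denom_ne ha ha
    simpa [norm_pos_iff] using this
  apply mul_right_cancel₀
    (ne_of_gt (mul_pos (mul_pos hD1 hD2) hT) :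
      ‖d1‖ * ‖d2‖ * ‖1 - (starRingEnd ℂ) a * a‖ ≠ 0)
  linear_combination
    (‖1 - (starRingEnd ℂ) a * a‖ * ‖1 - (starRingEnd ℂ) w * z‖) * t1
    - (‖1 - (starRingEnd ℂ) a * a‖ * ‖z - w‖) * t2

private lemma aut_iter {φ : ℂ → ℂ} (hφ : IsDiscAut φ) (n : ℕ) {z w : ℂ}
    (hz : ‖z‖ < 1) (hw : ‖w‖ < 1) :
    ‖φ^[n] z‖ < 1 ∧ ‖φ^[n] w‖ < 1 ∧
    ‖φ^[n] z - φ^[n] w‖ * ‖1 - (starRingEnd ℂ) w * z‖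
      = ‖z - w‖ * ‖1 - (starRingEnd ℂ) (φ^[n] w) * (φ^[n] z)‖ := by
  induction n with
  | zero => simpa using ⟨hz, hw⟩
  | succ n ih =>
    obtain ⟨hZ, hW, hEq⟩ := ih
    rw [Function.iterate_succ_apply', Function.iterate_succ_apply']
    refine ⟨aut_maps hφ hZ, aut_maps hφ hW, ?_⟩
    have hstep := aut_step hφ hZ hW
    have hne : 0 < ‖1 - (starRingEnd ℂ) (φ^[n] w) * (φ^[n] z)‖ := by
      simpa [norm_pos_iff] using denom_ne hW hZ
    apply mul_right_cancel₀ (ne_of_gt hne)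
    calc ‖φ (φ^[n] z) - φ (φ^[n] w)‖ * ‖1 - (starRingEnd ℂ) w * z‖ *
          ‖1 - (starRingEnd ℂ) (φ^[n] w) * (φ^[n] z)‖
        = (‖φ (φ^[n] z) - φ (φ^[n] w)‖ *
            ‖1 - (starRingEnd ℂ) (φ^[n] w) * (φ^[n] z)‖) *
            ‖1 - (starRingEnd ℂ) w * z‖ := by ring
      _ = (‖φ^[n] z - φ^[n] w‖ *
            ‖1 - (starRingEnd ℂ) (φ (φ^[n] w)) * (φ (φ^[n] z))‖) *
            ‖1 - (starRingEnd ℂ) w * z‖ := by rw [hstep]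
      _ = (‖φ^[n] z - φ^[n] w‖ * ‖1 - (starRingEnd ℂ) w * z‖) *
            ‖1 - (starRingEnd ℂ) (φ (φ^[n] w)) * (φ (φ^[n] z))‖ := by ring
      _ = (‖z - w‖ * ‖1 - (starRingEnd ℂ) (φ^[n] w) * (φ^[n] z)‖) *
            ‖1 - (starRingEnd ℂ) (φ (φ^[n] w)) * (φ (φ^[n] z))‖ := by rw [hEq]
      _ = ‖z - w‖ * ‖1 - (starRingEnd ℂ) (φ (φ^[n] w)) * (φ (φ^[n] z))‖ *
            ‖1 - (starRingEnd ℂ) (φ^[n] w) * (φ^[n] z)‖ := by ring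

private lemma est_lemma {z w : ℂ} {r : ℝ} (hz : ‖z‖ < 1) (hw : ‖w‖ < 1)
    (hr0 : 0 ≤ r) (hr : r < 1)
    (h : ‖z - w‖ = r * ‖1 - (starRingEnd ℂ) w * z‖) :
    1 - ‖w‖ ≤ (1 + r) / (1 - r) * (1 - ‖z‖) := by
  set D := ‖1 - (starRingEnd ℂ) w * z‖ with hD
  have hDnn : 0 ≤ D := norm_nonneg _
  have habs1 : ‖(1 : ℂ) - (starRingEnd ℂ) z * z‖ = 1 - ‖z‖ ^ 2 := by
    rw [mul_comm, Complex.mul_conj]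
    rw [show (1 : ℂ) - (Complex.normSq z : ℂ) = ((1 - Complex.normSq z : ℝ) : ℂ) by
      push_cast; ring]
    rw [Complex.norm_real, Real.norm_eq_abs, ← Complex.sq_norm, abs_of_nonneg]
    nlinarith [norm_nonneg z]
  have hA1 : D ≤ (1 - ‖z‖ ^ 2) + r * D := by
    have hsplit : (1 : ℂ) - (starRingEnd ℂ) w * z
        = (1 - (starRingEnd ℂ) z * z) + ((starRingEnd ℂ) z - (starRingEnd ℂ) w) * z := by
      ring
    have htri : D ≤ ‖1 - (starRingEnd ℂ) z * z‖ +
        ‖((starRingEnd ℂ) z - (starRingEnd ℂ) w) * z‖ := by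
      rw [hD, hsplit]; exact norm_add_le _ _
    have h2 : ‖((starRingEnd ℂ) z - (starRingEnd ℂ) w) * z‖
        = ‖z - w‖ * ‖z‖ := by
      rw [norm_mul, show (starRingEnd ℂ) z - (starRingEnd ℂ) w
        = (starRingEnd ℂ) (z - w) by rw [map_sub], Complex.norm_conj]
    rw [habs1, h2, h] at htri
    nlinarith [norm_nonneg z, mul_nonneg hr0 hDnn]
  have hA2 : D * (1 - r) ≤ 2 * (1 - ‖z‖) := by
    nlinarith [norm_nonneg z]
  have hB : ‖z‖ ≤ ‖w‖ + ‖z - w‖ := by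
    calc ‖z‖ = ‖w + (z - w)‖ := by ring_nf
      _ ≤ ‖w‖ + ‖z - w‖ := norm_add_le _ _
  rw [div_mul_eq_mul_div, le_div_iff₀ (by linarith)]
  nlinarith [h, mul_nonneg hr0 hDnn, mul_le_mul_of_nonneg_left hA2 hr0]

/-- If every sequence `(a_n)` in `D` with `φ^[n](a_n) = 0` for all `n` is a
Blaschke sequence, then for any disc automorphism `ψ`, every sequence `(b_n)` in `D` with
`ψ(φ^[n](b_n)) = 0` for all `n` is a Blaschke sequence. -/
theorem stmt_14 (φ : ℂ → ℂ) (hφ : IsDiscAut φ)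
    (hblaschke : ∀ a : ℕ → ℂ, (∀ n : ℕ, ‖a n‖ < 1) →
      (∀ n : ℕ, φ^[n] (a n) = 0) → Summable (fun n : ℕ => 1 - ‖a n‖))
    (ψ : ℂ → ℂ) (hψ : IsDiscAut ψ)
    (b : ℕ → ℂ) (hb : ∀ n : ℕ, ‖b n‖ < 1)
    (hzero : ∀ n : ℕ, ψ (φ^[n] (b n)) = 0) :
    Summable (fun n : ℕ => 1 - ‖b n‖) := by
  obtain ⟨w0, lamψ, hw0, hlamψ, hfψ⟩ := hψ
  -- every φ^[n] (b n) equals w0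
  have hfix : ∀ n : ℕ, φ^[n] (b n) = w0 := by
    intro n
    have hX : ‖φ^[n] (b n)‖ < 1 := (aut_iter hφ n (hb n) (hb n)).1
    have h0 := hzero n
    rw [hfψ] at h0
    have hden := denom_ne hw0 hX
    have hlamne : lamψ ≠ 0 := by
      intro h; rw [h] at hlamψ; simp at hlamψ
    rw [div_eq_zero_iff] at h0
    rcases h0 with h0 | h0
    · rcases mul_eq_zero.mp h0 with h | h
      · exact absurd h hlamne
      · exact sub_eq_zero.mp h
    · exact absurd h0 hden
  -- the zero-sequence a
  have hex : ∀ n : ℕ, ∃ z : ℂ, ‖z‖ < 1 ∧ φ^[n] z = 0 := by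
    intro n
    induction n with
    | zero => exact ⟨0, by simp, by simp⟩
    | succ n ih =>
      obtain ⟨z, hz, hz0⟩ := ih
      obtain ⟨y, hy, hyz⟩ := aut_surj hφ hz
      exact ⟨y, hy, by rw [Function.iterate_succ_apply, hyz, hz0]⟩
  choose a ha hA using hex
  have hsum_a := hblaschke a ha hA
  set r := ‖w0‖ with hr_def
  have hr0 : 0 ≤ r := norm_nonneg _
  have hkey : ∀ n : ℕ, ‖a n - b n‖
      = r * ‖1 - (starRingEnd ℂ) (b n) * (a n)‖ := by
    intro n
    have h := (aut_iter hφ n (ha n) (hb n)).2.2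
    rw [hA n, hfix n] at h
    simpa [hr_def] using h.symm
  have hest : ∀ n : ℕ, 1 - ‖b n‖
      ≤ (1 + r) / (1 - r) * (1 - ‖a n‖) := fun n =>
    est_lemma (ha n) (hb n) hr0 hw0 (hkey n)
  exact Summable.of_nonneg_of_le (fun n => by linarith [hb n])
    hest (hsum_a.mul_left _)
end
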